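/- (Heteroscedasticity representation of the identification denominator) Under the stated setup, the identification denominator equals the covariance of W with the conditional variance of A given ℋ: E[ R_W·(R_A² − E[R_A² | 𝒢]) ] = E[ R_W·( E[A² | ℋ] − (E[A | ℋ])² ) ]. In the paper's notation this says the denominator equals Cov(h(Z), Var(A | Z, X) | X)-type quantity, so identification requires that the conditional variance of A vary with the instruments, which is Assumption 2(iii). -/

import Mathlib

open MeasureTheory

/-- Conditional expectation of an L² function is in L². -/
lemma memℒp_two_condexp {Ω : Type*} {m m0 : MeasurableSpace Ω} (hm : m ≤ m0)
    {P : Measure Ω} [IsFiniteMeasure P] {f : Ω → ℝ} (hf : MemLp f 2 P) :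
    MemLp (P[f|m]) 2 P := by
  set F : Lp ℝ 2 P := hf.toLp f with hF
  set g : Lp ℝ 2 P := (condExpL2 ℝ ℝ hm F : Lp ℝ 2 P) with hg
  have heq : (g : Ω → ℝ) =ᵐ[P] P[f|m] := by
    refine ae_eq_condExp_of_forall_setIntegral_eq hm (hf.integrable one_le_two)
      (fun s _ _ => ((Lp.memLp g).integrable one_le_two).integrableOn)
      (fun s hs hμs => ?_) (aestronglyMeasurable_condExpL2 hm F)
    rw [integral_condExpL2_eq hm F hs hμs.ne]
    exact setIntegral_congr_ae (hm s hs) (hf.coeFn_toLp.mono fun x hx _ => hx)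
  exact (Lp.memLp g).ae_eq heq

/-- Pull-out: `∫ f·g = ∫ f·E[g|m]` for `m`-measurable `f`. -/
lemma integral_mul_eq_integral_mul_condexp {Ω : Type*} {m m0 : MeasurableSpace Ω} (hm : m ≤ m0)
    {P : Measure Ω} [IsFiniteMeasure P] {f g : Ω → ℝ} (hfm : StronglyMeasurable[m] f)
    (hfg : Integrable (fun ω => f ω * g ω) P) (hg : Integrable g P) :
    ∫ ω, f ω * g ω ∂P = ∫ ω, f ω * (P[g|m]) ω ∂P := by
  have h1 : ∫ ω, f ω * g ω ∂P = ∫ ω, (P[fun ω => f ω * g ω|m]) ω ∂P :=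
    (integral_condExp hm).symm
  rw [h1]
  exact integral_congr_ae (condExp_mul_of_stronglyMeasurable_left hfm hfg hg)

/-- Product of two L² functions is integrable. -/
lemma integrable_mul_of_memℒp_two {Ω : Type*} {m0 : MeasurableSpace Ω} {P : Measure Ω}
    {f g : Ω → ℝ} (hf : MemLp f 2 P) (hg : MemLp g 2 P) :
    Integrable (fun ω => f ω * g ω) P := by
  have h : MemLp (f • g) 1 P := hg.smul hf (hpqr := ⟨by rw [inv_one, ENNReal.inv_two_add_inv_two]⟩)
  simpa [smul_eq_mul, Pi.mul_def] using memLp_one_iff_integrable.mp h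

/-- **Heteroscedasticity representation of the identification denominator.** The
identification denominator equals the covariance of `W` with the conditional variance
of `A` given `ℋ`:
`E[R_W (R_A² − E[R_A² | 𝒢])] = E[R_W (E[A² | ℋ] − (E[A | ℋ])²)]`. -/
theorem denominator_heteroscedasticity
    {Ω : Type*} {m0 : MeasurableSpace Ω} (P : Measure Ω) [IsProbabilityMeasure P]
    (𝒢 ℋ : MeasurableSpace Ω) (h𝒢ℋ : 𝒢 ≤ ℋ) (hℋm0 : ℋ ≤ m0)
    (A W : Ω → ℝ) (hA4 : MemLp A 4 P)
    (CW : ℝ) (hWbd : ∀ ω, |W ω| ≤ CW) (hWmeas : Measurable[ℋ] W)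
    (RW RA : Ω → ℝ)
    (hRW : RW = fun ω => W ω - (P[W|𝒢]) ω)
    (hRA : RA = fun ω => A ω - (P[A|ℋ]) ω) :
    ∫ ω, RW ω * (RA ω ^ 2 - (P[fun ω' => RA ω' ^ 2|𝒢]) ω) ∂P
      = ∫ ω, RW ω * ((P[fun ω' => A ω' ^ 2|ℋ]) ω - ((P[A|ℋ]) ω) ^ 2) ∂P := by
  have h𝒢m0 : 𝒢 ≤ m0 := h𝒢ℋ.trans hℋm0
  set e : Ω → ℝ := P[A|ℋ] with he
  set eW : Ω → ℝ := P[W|𝒢] with heW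
  set c : Ω → ℝ := P[fun ω' => RA ω' ^ 2|𝒢] with hc
  -- L² facts
  have hA2 : MemLp A 2 P := hA4.mono_exponent (by norm_num)
  have he2 : MemLp e 2 P := memℒp_two_condexp hℋm0 hA2
  have hRA2 : MemLp RA 2 P := by rw [hRA]; exact hA2.sub he2
  have hIRA2 : Integrable (fun ω => RA ω ^ 2) P := by
    simpa [pow_two] using integrable_mul_of_memℒp_two hRA2 hRA2
  have hIA2 : Integrable (fun ω => A ω ^ 2) P := by
    simpa [pow_two] using integrable_mul_of_memℒp_two hA2 hA2
  have hIAe : Integrable (fun ω => A ω * e ω) P := integrable_mul_of_memℒp_two hA2 he2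
  have hIe2 : Integrable (fun ω => e ω ^ 2) P := by
    simpa [pow_two] using integrable_mul_of_memℒp_two he2 he2
  have hIW : Integrable W P :=
    memLp_one_iff_integrable.mp <|
      MemLp.of_bound ((hWmeas.stronglyMeasurable.mono hℋm0).aestronglyMeasurable)
        CW (ae_of_all _ fun ω => by simpa [Real.norm_eq_abs] using hWbd ω)
  -- boundedness of RW
  have hWbd' : ∀ᵐ ω ∂P, |W ω| ≤ (CW.toNNReal : ℝ) :=
    ae_of_all _ fun ω => (hWbd ω).trans (Real.le_coe_toNNReal CW)
  have heWbd : ∀ᵐ ω ∂P, |eW ω| ≤ (CW.toNNReal : ℝ) :=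
    ae_bdd_condExp_of_ae_bdd hWbd'
  have hRWbd : ∀ᵐ ω ∂P, ‖RW ω‖ ≤ 2 * (CW.toNNReal : ℝ) := by
    filter_upwards [heWbd] with ω hω
    have h1 : |W ω| ≤ (CW.toNNReal : ℝ) := (hWbd ω).trans (Real.le_coe_toNNReal CW)
    rw [hRW]
    simp only [Real.norm_eq_abs]
    calc |W ω - eW ω| ≤ |W ω| + |eW ω| := abs_sub _ _
      _ ≤ _ := by linarith
  -- measurability of RW
  have hRWsm : StronglyMeasurable[ℋ] RW := by
    rw [hRW]
    exact (hWmeas.stronglyMeasurable).sub (stronglyMeasurable_condExp.mono h𝒢ℋ)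
  have hRWaesm : AEStronglyMeasurable[m0] RW P := (hRWsm.mono hℋm0).aestronglyMeasurable
  have hRWmul : ∀ {g : Ω → ℝ}, Integrable g P → Integrable (fun ω => RW ω * g ω) P :=
    fun hg => hg.bdd_mul hRWaesm hRWbd
  -- split LHS
  have hsplitL : (fun ω => RW ω * (RA ω ^ 2 - c ω))
      = fun ω => RW ω * RA ω ^ 2 - RW ω * c ω := by funext ω; ring
  rw [hsplitL, integral_sub (hRWmul hIRA2) (hRWmul integrable_condExp)]
  -- second term vanishes
  have hterm2 : ∫ ω, RW ω * c ω ∂P = 0 := by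
    have hcsm : StronglyMeasurable[𝒢] c := stronglyMeasurable_condExp
    have hIcW : Integrable (fun ω => c ω * W ω) P := by
      have h := (integrable_condExp (m := 𝒢) (f := fun ω' => RA ω' ^ 2) (μ := P)).bdd_mul
        (hWmeas.stronglyMeasurable.mono hℋm0).aestronglyMeasurable
        (hWbd'.mono fun ω h => by rw [Real.norm_eq_abs]; exact h)
      have heq : (fun ω => W ω * c ω) = fun ω => c ω * W ω := by funext ω; ring
      rwa [heq] at h
    have heWaesm : AEStronglyMeasurable[m0] eW P :=
      (stronglyMeasurable_condExp.mono h𝒢m0).aestronglyMeasurable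
    have hIceW : Integrable (fun ω => c ω * eW ω) P := by
      have h := (integrable_condExp (m := 𝒢) (f := fun ω' => RA ω' ^ 2) (μ := P)).bdd_mul
        heWaesm (heWbd.mono fun ω h => by rw [Real.norm_eq_abs]; exact h)
      have heq : (fun ω => eW ω * c ω) = fun ω => c ω * eW ω := by funext ω; ring
      rwa [heq] at h
    have hpull : ∫ ω, c ω * W ω ∂P = ∫ ω, c ω * eW ω ∂P :=
      integral_mul_eq_integral_mul_condexp h𝒢m0 hcsm hIcW hIW
    have hexp : (fun ω => RW ω * c ω) = fun ω => c ω * W ω - c ω * eW ω := by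
      funext ω; rw [hRW]; ring
    rw [hexp, integral_sub hIcW hIceW, hpull, sub_self]
  rw [hterm2, sub_zero]
  -- first term: pull out at ℋ
  have hpull1 : ∫ ω, RW ω * RA ω ^ 2 ∂P
      = ∫ ω, RW ω * (P[fun ω' => RA ω' ^ 2|ℋ]) ω ∂P :=
    integral_mul_eq_integral_mul_condexp hℋm0 hRWsm (hRWmul hIRA2) hIRA2
  rw [hpull1]
  -- conditional variance identity
  have hIg : Integrable (fun ω => 2 * (A ω * e ω) - e ω ^ 2) P :=
    (hIAe.const_mul 2).sub hIe2
  have hsplit : (fun ω' => RA ω' ^ 2)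
      = (fun ω => A ω ^ 2) - fun ω => 2 * (A ω * e ω) - e ω ^ 2 := by
    funext ω; rw [hRA]; simp only [Pi.sub_apply]; ring
  have hstep1 : P[fun ω' => RA ω' ^ 2|ℋ]
      =ᵐ[P] P[fun ω => A ω ^ 2|ℋ] - P[fun ω => 2 * (A ω * e ω) - e ω ^ 2|ℋ] := by
    rw [hsplit]; exact condExp_sub hIA2 hIg ℋ
  have hmul : P[fun ω => e ω * A ω|ℋ] =ᵐ[P] fun ω => e ω * e ω := by
    have heq : (fun ω => A ω * e ω) = fun ω => e ω * A ω := by funext ω; ring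
    rw [heq] at hIAe
    exact condExp_mul_of_stronglyMeasurable_left (μ := P) (m := ℋ)
      stronglyMeasurable_condExp hIAe (hA2.integrable one_le_two)
  have hsm_e2 : StronglyMeasurable[ℋ] (fun ω => e ω ^ 2) :=
    stronglyMeasurable_condExp.pow 2
  have he2c : P[fun ω => e ω ^ 2|ℋ] = fun ω => e ω ^ 2 :=
    condExp_of_stronglyMeasurable hℋm0 hsm_e2 hIe2
  have hstep2 : P[fun ω => 2 * (A ω * e ω) - e ω ^ 2|ℋ] =ᵐ[P] fun ω => e ω ^ 2 := by
    have hg2 : (fun ω => 2 * (A ω * e ω) - e ω ^ 2)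
        = (fun ω => (2 : ℝ) * (e ω * A ω)) - fun ω => e ω ^ 2 := by
      funext ω; simp only [Pi.sub_apply]; ring
    rw [hg2]
    have hIeA : Integrable (fun ω => e ω * A ω) P := integrable_mul_of_memℒp_two he2 hA2
    refine (condExp_sub (hIeA.const_mul 2) hIe2 ℋ).trans ?_
    have hsmul : P[fun ω => (2:ℝ) * (e ω * A ω)|ℋ]
        =ᵐ[P] fun ω => (2:ℝ) * (P[fun ω => e ω * A ω|ℋ]) ω := by
      have h := condExp_smul (μ := P) (m := ℋ) (2 : ℝ) (fun ω => e ω * A ω)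
      have heq : ((2:ℝ) • fun ω => e ω * A ω) = fun ω => (2:ℝ) * (e ω * A ω) := by
        funext ω; simp [smul_eq_mul]
      rw [heq] at h
      filter_upwards [h] with ω hω
      rw [hω]; simp [smul_eq_mul]
    rw [he2c]
    filter_upwards [hsmul, hmul] with ω h1 h2
    simp only [Pi.sub_apply]
    rw [h1, h2]
    ring
  have hfinal : P[fun ω' => RA ω' ^ 2|ℋ]
      =ᵐ[P] fun ω => (P[fun ω => A ω ^ 2|ℋ]) ω - e ω ^ 2 := by
    filter_upwards [hstep1, hstep2] with ω h1 h2
    simp only [Pi.sub_apply] at h1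
    rw [h1, h2]
  refine integral_congr_ae ?_
  filter_upwards [hfinal] with ω h
  rw [h]
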